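/- Let P ∈ ℝ^{n×n} be symmetric positive definite and λ ∈ [0, 1) be such that A_K(𝒥)^⊤ P A_K(𝒥) ⪯ λ P for every subset 𝒥 ⊆ {1, …, m}. Then for every e ∈ ℝ^n and every v ∈ ℝ^m with ‖v‖_∞ ≤ 1, f(e, v)^⊤ P f(e, v) ≤ λ · e^⊤ P e. -/

import Mathlib

open Matrix

/-- The scalar saturation function `sat(x) = sign(x) · min(|x|, 1)`
(saturation bounds normalized to 1). -/
noncomputable def sat (x : ℝ) : ℝ := Real.sign x * min |x| 1

/-- The componentwise saturation function `φ : ℝ^m → ℝ^m`. -/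
noncomputable def satVec {m : ℕ} (u : Fin m → ℝ) : Fin m → ℝ := fun j => sat (u j)

/-- The saturated error dynamics `f(e, v) = A e + B (φ(K e + v) − v)`. -/
noncomputable def errDyn {n m : ℕ} (A : Matrix (Fin n) (Fin n) ℝ)
    (B : Matrix (Fin n) (Fin m) ℝ) (K : Matrix (Fin m) (Fin n) ℝ)
    (e : Fin n → ℝ) (v : Fin m → ℝ) : Fin n → ℝ :=
  A.mulVec e + B.mulVec (satVec (K.mulVec e + v) - v)

/-- `A_K(𝒥) = A + Σ_{j ∈ 𝒥} B_{(j)} K_j`. -/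
noncomputable def AK {n m : ℕ} (A : Matrix (Fin n) (Fin n) ℝ)
    (B : Matrix (Fin n) (Fin m) ℝ) (K : Matrix (Fin m) (Fin n) ℝ)
    (J : Finset (Fin m)) : Matrix (Fin n) (Fin n) ℝ :=
  A + ∑ j ∈ J, Matrix.vecMulVec (fun i => B i j) (K j)

lemma sat_eq' (x : ℝ) : sat x = max (-1) (min x 1) := by
  unfold sat
  rcases lt_trichotomy x 0 with h | h | h
  · rw [Real.sign_of_neg h, abs_of_neg h]
    have hx1 : min x 1 = x := min_eq_left (by linarith)
    rcases le_total x (-1) with h1 | h1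
    · rw [min_eq_right (by linarith : (1:ℝ) ≤ -x), hx1, max_eq_left h1]; ring
    · rw [min_eq_left (by linarith : -x ≤ 1), hx1, max_eq_right h1]; ring
  · simp [h]
  · rw [Real.sign_of_pos h, abs_of_pos h, one_mul, max_eq_right]
    exact le_min (by linarith) (by linarith)

lemma sat_sub_lb (a b : ℝ) (hb : |b| ≤ 1) : min 0 a ≤ max (-1) (min (a+b) 1) - b := by
  have hb' := abs_le.mp hb
  simp only [min_def, max_def]; split_ifs <;> linarith

lemma sat_sub_ub (a b : ℝ) (hb : |b| ≤ 1) : max (-1) (min (a+b) 1) - b ≤ max 0 a := by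
  have hb' := abs_le.mp hb
  simp only [min_def, max_def]; split_ifs <;> linarith

lemma quad_convex {n : ℕ} {P : Matrix (Fin n) (Fin n) ℝ} (hP : P.PosSemidef)
    (x y : Fin n → ℝ) (θ : ℝ) (h0 : 0 ≤ θ) (h1 : θ ≤ 1) :
    (x + θ • y) ⬝ᵥ P.mulVec (x + θ • y) ≤
      max (x ⬝ᵥ P.mulVec x) ((x + y) ⬝ᵥ P.mulVec (x + y)) := by
  have hy : 0 ≤ y ⬝ᵥ P.mulVec y := by
    have := hP.dotProduct_mulVec_nonneg y; simpa using this
  have expand : ∀ c : ℝ, (x + c • y) ⬝ᵥ P.mulVec (x + c • y)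
      = x ⬝ᵥ P.mulVec x + c * (x ⬝ᵥ P.mulVec y + y ⬝ᵥ P.mulVec x)
        + c^2 * (y ⬝ᵥ P.mulVec y) := by
    intro c
    simp [mulVec_add, mulVec_smul, add_dotProduct, dotProduct_add, smul_dotProduct,
      dotProduct_smul, smul_eq_mul]
    ring
  rw [expand]
  set s := x ⬝ᵥ P.mulVec y + y ⬝ᵥ P.mulVec x with hs
  set p := y ⬝ᵥ P.mulVec y with hp
  have h1' : (x + y) ⬝ᵥ P.mulVec (x + y) = x ⬝ᵥ P.mulVec x + s + p := by
    have := expand 1; simpa using this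
  rw [h1']
  rcases le_total 0 (s + p) with hc | hc
  · apply le_trans _ (le_max_right _ _)
    nlinarith [mul_nonneg (sub_nonneg.mpr h1) hc, mul_nonneg (mul_nonneg h0 (sub_nonneg.mpr h1)) hy]
  · apply le_trans _ (le_max_left _ _)
    nlinarith [mul_nonneg h0 (neg_nonneg.mpr hc), mul_nonneg (mul_nonneg h0 (sub_nonneg.mpr h1)) hy]

lemma quad_corner_max {n m : ℕ} {P : Matrix (Fin n) (Fin n) ℝ} (hP : P.PosSemidef)
    (x0 : Fin n → ℝ) (c : Fin m → (Fin n → ℝ)) (cb : ℝ)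
    (hcorner : ∀ s : Fin m → ℝ, (∀ j, s j = 0 ∨ s j = 1) →
      (x0 + ∑ j, s j • c j) ⬝ᵥ P.mulVec (x0 + ∑ j, s j • c j) ≤ cb)
    (t : Fin m → ℝ) (ht : ∀ j, 0 ≤ t j ∧ t j ≤ 1) :
    (x0 + ∑ j, t j • c j) ⬝ᵥ P.mulVec (x0 + ∑ j, t j • c j) ≤ cb := by
  suffices H : ∀ S : Finset (Fin m), ∀ t : Fin m → ℝ, (∀ j, 0 ≤ t j ∧ t j ≤ 1) →
      (∀ j ∉ S, t j = 0 ∨ t j = 1) →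
      (x0 + ∑ j, t j • c j) ⬝ᵥ P.mulVec (x0 + ∑ j, t j • c j) ≤ cb by
    exact H Finset.univ t ht (fun j hj => absurd (Finset.mem_univ j) hj)
  intro S
  induction S using Finset.induction with
  | empty => intro t ht hcor; exact hcorner t (fun j => hcor j (Finset.notMem_empty j))
  | @insert a S ha IH =>
    intro t ht hout
    have hsum : ∀ θ : ℝ, (∑ j, (Function.update t a θ) j • c j)
        = θ • c a + ∑ j ∈ Finset.univ.erase a, t j • c j := by
      intro θ
      have : (fun j => (Function.update t a θ) j • c j)
          = Function.update (fun j => t j • c j) a (θ • c a) := by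
        funext j
        by_cases hj : j = a
        · subst hj; simp
        · simp [Function.update_of_ne hj]
      rw [this, Finset.sum_update_of_mem (Finset.mem_univ a), Finset.sdiff_singleton_eq_erase]
    set x : Fin n → ℝ := x0 + ∑ j ∈ Finset.univ.erase a, t j • c j with hx
    have hform : ∀ θ : ℝ, x0 + ∑ j, (Function.update t a θ) j • c j = x + θ • c a := by
      intro θ; rw [hsum]; rw [hx]; abel
    have hupdate : ∀ θ : ℝ, 0 ≤ θ → θ ≤ 1 →
        (∀ j, 0 ≤ Function.update t a θ j ∧ Function.update t a θ j ≤ 1) := by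
      intro θ hθ0 hθ1 j
      by_cases hj : j = a
      · subst hj; simp [hθ0, hθ1]
      · simp [Function.update_of_ne hj]; exact ⟨(ht j).1, (ht j).2⟩
    have hIH : ∀ θ : ℝ, (θ = 0 ∨ θ = 1) →
        (x + θ • c a) ⬝ᵥ P.mulVec (x + θ • c a) ≤ cb := by
      intro θ hθ
      rw [← hform θ]
      apply IH (Function.update t a θ)
      · exact hupdate θ (by rcases hθ with h|h <;> simp [h]) (by rcases hθ with h|h <;> simp [h])
      · intro j hj
        by_cases hja : j = a
        · subst hja; simp [hθ]
        · rw [Function.update_of_ne hja]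
          exact hout j (by simp [hja, hj])
    have key : (x0 + ∑ j, t j • c j) = x + t a • c a := by
      have := hform (t a)
      rwa [Function.update_eq_self] at this
    rw [key]
    have h0 := hIH 0 (Or.inl rfl)
    have h1 := hIH 1 (Or.inr rfl)
    simp only [zero_smul, add_zero, one_smul] at h0 h1
    calc (x + t a • c a) ⬝ᵥ P.mulVec (x + t a • c a)
        ≤ max (x ⬝ᵥ P.mulVec x) ((x + c a) ⬝ᵥ P.mulVec (x + c a)) :=
          quad_convex hP x (c a) (t a) (ht a).1 (ht a).2
      _ ≤ cb := max_le h0 h1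

/-- a scaling factor for the saturation deviation -/
lemma sat_factor (a b : ℝ) (hb : |b| ≤ 1) :
    ∃ t : ℝ, 0 ≤ t ∧ t ≤ 1 ∧ sat (a + b) - b = t * a := by
  have hlb := sat_sub_lb a b hb
  have hub := sat_sub_ub a b hb
  rw [← sat_eq'] at hlb hub
  by_cases ha : a = 0
  · refine ⟨0, le_refl 0, zero_le_one, ?_⟩
    subst ha
    simp only [min_self, max_self] at hlb hub
    simp at hlb hub ⊢
    linarith
  · refine ⟨(sat (a + b) - b) / a, ?_, ?_, by field_simp⟩
    · rcases lt_or_gt_of_ne ha with h | h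
      · rw [div_nonneg_iff]
        right
        refine ⟨?_, h.le⟩
        calc sat (a+b) - b ≤ max 0 a := hub
          _ = 0 := max_eq_left h.le
      · apply div_nonneg _ h.le
        calc (0:ℝ) = min 0 a := (min_eq_left h.le).symm
          _ ≤ _ := hlb
    · rcases lt_or_gt_of_ne ha with h | h
      · rw [div_le_iff_of_neg h, one_mul]
        calc a = min 0 a := (min_eq_right h.le).symm
          _ ≤ _ := hlb
      · rw [div_le_one h]
        calc sat (a+b) - b ≤ max 0 a := hub
          _ = a := max_eq_right h.le

/-- If `P ≻ 0` and `λ ∈ [0, 1)` satisfy `A_K(𝒥)ᵀ P A_K(𝒥) ⪯ λ P` for every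
subset `𝒥 ⊆ {1, …, m}`, then for every `e` and every `v` with `‖v‖_∞ ≤ 1`,
`f(e,v)ᵀ P f(e,v) ≤ λ · eᵀ P e`. -/
theorem stmt3 {n m : ℕ} (A : Matrix (Fin n) (Fin n) ℝ) (B : Matrix (Fin n) (Fin m) ℝ)
    (K : Matrix (Fin m) (Fin n) ℝ) (P : Matrix (Fin n) (Fin n) ℝ) (hP : P.PosDef)
    (lam : ℝ) (hlam : lam ∈ Set.Ico (0 : ℝ) 1)
    (hcontr : ∀ J : Finset (Fin m),
      (lam • P - (AK A B K J)ᵀ * P * AK A B K J).PosSemidef)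
    (e : Fin n → ℝ) (v : Fin m → ℝ) (hv : ∀ j, |v j| ≤ 1) :
    errDyn A B K e v ⬝ᵥ P.mulVec (errDyn A B K e v) ≤ lam * (e ⬝ᵥ P.mulVec e) := by
  set u : Fin m → ℝ := K.mulVec e with hu
  have hfac : ∀ j, ∃ t : ℝ, 0 ≤ t ∧ t ≤ 1 ∧ sat (u j + v j) - v j = t * u j :=
    fun j => sat_factor (u j) (v j) (hv j)
  choose t ht0 ht1 htfac using hfac
  set c : Fin m → (Fin n → ℝ) := fun j => u j • (fun i => B i j) with hc
  -- errDyn expressed via t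
  have herr : errDyn A B K e v = A.mulVec e + ∑ j, t j • c j := by
    funext i
    simp only [errDyn, Pi.add_apply, mulVec, dotProduct, Finset.sum_apply,
      Pi.sub_apply, satVec, Pi.smul_apply, hc, smul_eq_mul]
    congr 1
    apply Finset.sum_congr rfl
    intro j _
    have hKj : ∑ x, K j x * e x = u j := rfl
    have := htfac j
    rw [hKj, this]; ring
  -- corner case
  have hAKvec : ∀ J : Finset (Fin m), (AK A B K J).mulVec e
      = A.mulVec e + ∑ j ∈ J, c j := by
    intro J
    rw [AK, add_mulVec]
    congr 1
    have hsum : (∑ j ∈ J, vecMulVec (fun i => B i j) (K j)).mulVec e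
        = ∑ j ∈ J, (vecMulVec (fun i => B i j) (K j)).mulVec e := by
      induction J using Finset.induction with
      | empty => simp
      | insert _ _ hj ih => simp [Finset.sum_insert hj, add_mulVec, ih]
    rw [hsum]
    apply Finset.sum_congr rfl
    intro j _
    funext i
    simp [vecMulVec, mulVec, dotProduct, hc, hu, Finset.mul_sum, mul_comm, mul_assoc,
      mul_left_comm]
  have hAKbound : ∀ J : Finset (Fin m),
      ((AK A B K J).mulVec e) ⬝ᵥ P.mulVec ((AK A B K J).mulVec e) ≤ lam * (e ⬝ᵥ P.mulVec e) := by
    intro J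
    have h := (hcontr J).dotProduct_mulVec_nonneg e
    simp only [star_trivial] at h
    rw [sub_mulVec, smul_mulVec, dotProduct_sub, dotProduct_smul, smul_eq_mul] at h
    have heq : e ⬝ᵥ ((AK A B K J)ᵀ * P * AK A B K J).mulVec e
        = ((AK A B K J).mulVec e) ⬝ᵥ P.mulVec ((AK A B K J).mulVec e) := by
      rw [← mulVec_mulVec, ← mulVec_mulVec, dotProduct_mulVec, vecMul_transpose]
    linarith [h, heq ▸ h]
  rw [herr]
  apply quad_corner_max hP.posSemidef
  · intro s hs
    have : ∑ j, s j • c j = ∑ j ∈ Finset.univ.filter (fun j => s j = 1), c j := by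
      rw [Finset.sum_filter]
      apply Finset.sum_congr rfl
      intro j _
      rcases hs j with h | h <;> simp [h]
    rw [this, ← hAKvec]
    exact hAKbound _
  · exact fun j => ⟨ht0 j, ht1 j⟩
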